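/- Let q > 1 be real, λ = q − q^{−1}, γ ∈ ℝ, and let ε be a nonzero complex number. Then the function g(x) = ₁φ₁(−ε^{−1}; q^{−2}; q^{−4}, ε q^{−2γ−3} λ² x²) satisfies, for every real x, the reduced eigenvalue equation 0 = g(x)·(q + q^{−1} − ε q^{−2γ} λ² x²) − q^{−1} g(q² x) − q g(q^{−2} x)·(1 + q^{−2γ−1} λ² x²). -/

import Mathlib

open scoped BigOperators

/-- The q-shifted factorial `(a;p)_n = ∏_{i=0}^{n-1} (1 - a p^i)`. -/
noncomputable def qPoch (a p : ℂ) (n : ℕ) : ℂ :=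
  ∏ i ∈ Finset.range n, (1 - a * p ^ i)

/-- The basic hypergeometric series
`₁φ₁(a;c;p,z) = ∑_{j=0}^∞ ((a;p)_j / ((p;p)_j (c;p)_j)) (-1)^j p^(j(j-1)/2) z^j`. -/
noncomputable def phi11 (a c p z : ℂ) : ℂ :=
  ∑' j : ℕ, qPoch a p j / (qPoch p p j * qPoch c p j) * (-1) ^ j *
    p ^ (j * (j - 1) / 2) * z ^ j


noncomputable def hgCoef (a c p : ℂ) (j : ℕ) : ℂ :=
  qPoch a p j / (qPoch p p j * qPoch c p j) * (-1) ^ j * p ^ (j * (j - 1) / 2)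

lemma phi11_eq (a c p z : ℂ) : phi11 a c p z = ∑' j : ℕ, hgCoef a c p j * z ^ j := rfl

lemma one_sub_ne (b : ℂ) (hb : ‖b‖ < 1) : (1 : ℂ) - b ≠ 0 := by
  intro h
  have : b = 1 := by linear_combination -h
  simp [this] at hb

lemma one_sub_mul_pow_ne (b p : ℂ) (hp : ‖p‖ < 1) (hb : ‖b‖ < 1) (i : ℕ) :
    (1 : ℂ) - b * p ^ i ≠ 0 := by
  apply one_sub_ne
  calc ‖b * p ^ i‖ = ‖b‖ * ‖p‖ ^ i := by simp
    _ ≤ ‖b‖ * 1 := by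
        apply mul_le_mul_of_nonneg_left (pow_le_one₀ (norm_nonneg _) hp.le) (norm_nonneg _)
    _ < 1 := by simpa using hb

lemma qPoch_ne (b p : ℂ) (hp : ‖p‖ < 1) (hb : ‖b‖ < 1) (n : ℕ) :
    qPoch b p n ≠ 0 := by
  unfold qPoch
  apply Finset.prod_ne_zero_iff.2
  intro i _
  exact one_sub_mul_pow_ne b p hp hb i

lemma hgCoef_rec (a c p : ℂ) (hp : ‖p‖ < 1) (hc : ‖c‖ < 1) (j : ℕ) :
    hgCoef a c p (j + 1) * ((1 - p * p ^ j) * (1 - c * p ^ j)) =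
      hgCoef a c p j * (1 - a * p ^ j) * (-1) * p ^ j := by
  have e : (j + 1) * ((j + 1) - 1) / 2 = j * (j - 1) / 2 + j := by
    have h : (j + 1) * ((j + 1) - 1) = j * (j - 1) + 2 * j := by
      cases j with
      | zero => rfl
      | succ k => simp [Nat.succ_sub_one]; ring
    have h2 : 2 ∣ j * (j - 1) := by
      cases j with
      | zero => simp
      | succ k => simpa [Nat.succ_sub_one, Nat.mul_comm] using (Nat.even_mul_succ_self k).two_dvd
    obtain ⟨m, hm⟩ := h2
    rw [h, hm]
    omega
  have h1 : qPoch p p j ≠ 0 := qPoch_ne p p hp hp j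
  have h2 : qPoch c p j ≠ 0 := qPoch_ne c p hp hc j
  have h1' : (1:ℂ) - p * p ^ j ≠ 0 := one_sub_mul_pow_ne p p hp hp j
  have h2' : (1:ℂ) - c * p ^ j ≠ 0 := one_sub_mul_pow_ne c p hp hc j
  unfold hgCoef qPoch
  rw [Finset.prod_range_succ, Finset.prod_range_succ, Finset.prod_range_succ, e, pow_add, pow_succ]
  unfold qPoch at h1 h2
  field_simp
  have h3 : (1 - p ^ j * p) * (1 - p ^ j * c) ≠ 0 := by
    rw [mul_comm (p ^ j) p, mul_comm (p ^ j) c]; exact mul_ne_zero h1' h2'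
  rw [neg_inj, div_eq_iff h3]
  ring

lemma hgCoef_step (a c p : ℂ) (hp : ‖p‖ < 1) (hc : ‖c‖ < 1) (w : ℂ) (j : ℕ) :
    hgCoef a c p (j + 1) * w ^ (j + 1) =
      hgCoef a c p j * w ^ j *
        ((1 - a * p ^ j) / ((1 - p * p ^ j) * (1 - c * p ^ j)) * (-1) * p ^ j * w) := by
  have h1' : (1:ℂ) - p * p ^ j ≠ 0 := one_sub_mul_pow_ne p p hp hp j
  have h2' : (1:ℂ) - c * p ^ j ≠ 0 := one_sub_mul_pow_ne c p hp hc j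
  have hX : hgCoef a c p (j + 1) =
      hgCoef a c p j * (1 - a * p ^ j) * (-1) * p ^ j / ((1 - p * p ^ j) * (1 - c * p ^ j)) := by
    rw [eq_div_iff (mul_ne_zero h1' h2')]
    exact hgCoef_rec a c p hp hc j
  rw [hX, pow_succ]
  field_simp

lemma summable_hg (a c p : ℂ) (hp : ‖p‖ < 1) (hc : ‖c‖ < 1) (w : ℂ) :
    Summable (fun j : ℕ => hgCoef a c p j * w ^ j) := by
  apply summable_of_ratio_norm_eventually_le (r := 1/2) (by norm_num)
  have hppos : (0:ℝ) < 1 - ‖p‖ := by linarith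
  have hcpos : (0:ℝ) < 1 - ‖c‖ := by linarith
  set C : ℝ := (1 + ‖a‖) / ((1 - ‖p‖) * (1 - ‖c‖)) * ‖w‖ with hC
  have htend : Filter.Tendsto (fun j : ℕ => C * ‖p‖ ^ j) Filter.atTop (nhds 0) := by
    simpa using (tendsto_pow_atTop_nhds_zero_of_lt_one (norm_nonneg p) hp).const_mul C
  have hev : ∀ᶠ j : ℕ in Filter.atTop, C * ‖p‖ ^ j ≤ 1 / 2 :=
    htend.eventually_le_const (by norm_num : (0:ℝ) < 1/2)
  filter_upwards [hev] with j hj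
  rw [hgCoef_step a c p hp hc w j, norm_mul]
  rw [mul_comm (1/2 : ℝ) _]
  apply mul_le_mul_of_nonneg_left _ (norm_nonneg _)
  calc ‖(1 - a * p ^ j) / ((1 - p * p ^ j) * (1 - c * p ^ j)) * (-1) * p ^ j * w‖
      = ‖1 - a * p ^ j‖ / (‖1 - p * p ^ j‖ * ‖1 - c * p ^ j‖) * ‖p‖ ^ j * ‖w‖ := by
        simp [norm_mul, norm_div, norm_pow]
    _ ≤ (1 + ‖a‖) / ((1 - ‖p‖) * (1 - ‖c‖)) * ‖p‖ ^ j * ‖w‖ := by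
        have b1 : ‖1 - a * p ^ j‖ ≤ 1 + ‖a‖ := by
          calc ‖1 - a * p ^ j‖ ≤ ‖(1:ℂ)‖ + ‖a * p ^ j‖ := norm_sub_le _ _
            _ = 1 + ‖a‖ * ‖p‖ ^ j := by simp
            _ ≤ 1 + ‖a‖ * 1 := by
                have := pow_le_one₀ (norm_nonneg p) hp.le (n := j)
                nlinarith [norm_nonneg a]
            _ = 1 + ‖a‖ := by ring
        have b2 : 1 - ‖p‖ ≤ ‖1 - p * p ^ j‖ := by
          have : ‖p * p ^ j‖ ≤ ‖p‖ := by
            rw [norm_mul, norm_pow]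
            nlinarith [pow_le_one₀ (norm_nonneg p) hp.le (n := j), norm_nonneg p]
          have h := norm_sub_norm_le (1 : ℂ) (p * p ^ j)
          simp only [norm_one] at h
          linarith
        have b3 : 1 - ‖c‖ ≤ ‖1 - c * p ^ j‖ := by
          have : ‖c * p ^ j‖ ≤ ‖c‖ := by
            rw [norm_mul, norm_pow]
            nlinarith [pow_le_one₀ (norm_nonneg p) hp.le (n := j), norm_nonneg c]
          have h := norm_sub_norm_le (1 : ℂ) (c * p ^ j)
          simp only [norm_one] at h
          linarith
        gcongr
        all_goals first | positivity | linarith [norm_nonneg a]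
    _ = C * ‖p‖ ^ j := by rw [hC]; ring
    _ ≤ 1 / 2 := hj

lemma poly_key (Q R S P δ z Zj W X : ℂ) (hQR : Q*R = 1) (hSP : S*P = 1)
    (hrec : X * ((1 - R^4*P) * (1 - R^2*P)) = W * (1 + δ*P) * (-1) * P) :
    X * (Zj*z) * (Q + R) - R * (X * (S*Q^4 * (Zj*z))) - Q * (X * (P*R^4 * (Zj*z)))
      = W * Zj * (Q^3*z) + Q * (W * (P*Zj)) * (δ*Q^2*z) := by
  have hI1 : Q + R - R*(S*Q^4) - Q*(P*R^4) = -(Q^3*S) * ((1 - R^4*P) * (1 - R^2*P)) := by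
    linear_combination (-(Q^3*S) - R^3*P - R*(Q^2*R^2+Q*R+1) - Q*(Q*R+1) +
      R^3*P*(Q^2*R^2+Q*R+1)) * hQR + (-(Q^3*R^4) - Q^3*R^2 + Q^3*R^6*P) * hSP
  linear_combination (Zj*z*X) * hI1 + (-(Q^3*S)*(Zj*z)) * hrec +
    (Q^3*(Zj*z)*W*(1+δ*P)) * hSP

lemma key_step (Q ε z : ℂ) (hQ0 : Q ≠ 0) (hε : ε ≠ 0)
    (hR2 : ‖(Q⁻¹ : ℂ) ^ 2‖ < 1) (hR4 : ‖(Q⁻¹ : ℂ) ^ 4‖ < 1) (j : ℕ) :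
    hgCoef (-ε⁻¹) (Q⁻¹ ^ 2) (Q⁻¹ ^ 4) (j + 1) * z ^ (j + 1) * (Q + Q⁻¹) -
        Q⁻¹ * (hgCoef (-ε⁻¹) (Q⁻¹ ^ 2) (Q⁻¹ ^ 4) (j + 1) * (Q ^ 4 * z) ^ (j + 1)) -
        Q * (hgCoef (-ε⁻¹) (Q⁻¹ ^ 2) (Q⁻¹ ^ 4) (j + 1) * (Q⁻¹ ^ 4 * z) ^ (j + 1)) =
      hgCoef (-ε⁻¹) (Q⁻¹ ^ 2) (Q⁻¹ ^ 4) j * z ^ j * (Q ^ 3 * z) +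
        Q * (hgCoef (-ε⁻¹) (Q⁻¹ ^ 2) (Q⁻¹ ^ 4) j * (Q⁻¹ ^ 4 * z) ^ j) * (ε⁻¹ * Q ^ 2 * z) := by
  have hQR : Q * Q⁻¹ = 1 := mul_inv_cancel₀ hQ0
  have hSP : (Q ^ 4) ^ j * (Q⁻¹ ^ 4) ^ j = 1 := by
    rw [← mul_pow, ← mul_pow]
    rw [hQR]
    simp
  have hrec' : hgCoef (-ε⁻¹) (Q⁻¹ ^ 2) (Q⁻¹ ^ 4) (j + 1) *
      ((1 - Q⁻¹ ^ 4 * (Q⁻¹ ^ 4) ^ j) * (1 - Q⁻¹ ^ 2 * (Q⁻¹ ^ 4) ^ j)) =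
      hgCoef (-ε⁻¹) (Q⁻¹ ^ 2) (Q⁻¹ ^ 4) j * (1 + ε⁻¹ * (Q⁻¹ ^ 4) ^ j) * (-1) * (Q⁻¹ ^ 4) ^ j := by
    have h := hgCoef_rec (-ε⁻¹) (Q⁻¹ ^ 2) (Q⁻¹ ^ 4) hR4 hR2 j
    linear_combination h
  have h := poly_key Q Q⁻¹ ((Q ^ 4) ^ j) ((Q⁻¹ ^ 4) ^ j) ε⁻¹ z (z ^ j)
    (hgCoef (-ε⁻¹) (Q⁻¹ ^ 2) (Q⁻¹ ^ 4) j) (hgCoef (-ε⁻¹) (Q⁻¹ ^ 2) (Q⁻¹ ^ 4) (j + 1))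
    hQR hSP hrec'
  linear_combination h

/-- The function `g(x) = ₁φ₁(-ε⁻¹; q⁻²; q⁻⁴, ε q^{-2γ-3} λ² x²)` satisfies the reduced
eigenvalue equation
`0 = g(x)(q + q⁻¹ - ε q^{-2γ} λ² x²) - q⁻¹ g(q²x) - q g(q⁻²x)(1 + q^{-2γ-1} λ² x²)`
for every real `x`, where `λ = q - q⁻¹`. -/
theorem even_solution (q γ : ℝ) (hq : 1 < q) (ε : ℂ) (hε : ε ≠ 0)
    (g : ℝ → ℂ)
    (hg : ∀ x : ℝ, g x = phi11 (-ε⁻¹) ((q : ℂ) ^ (-2 : ℤ)) ((q : ℂ) ^ (-4 : ℤ))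
      (ε * ((q ^ (-2 * γ - 3) : ℝ) : ℂ) * ((q - q⁻¹ : ℝ) : ℂ) ^ 2 * (x : ℂ) ^ 2)) :
    ∀ x : ℝ,
      0 = g x * ((q : ℂ) + (q : ℂ)⁻¹ -
            ε * ((q ^ (-2 * γ) : ℝ) : ℂ) * ((q - q⁻¹ : ℝ) : ℂ) ^ 2 * (x : ℂ) ^ 2) -
        (q : ℂ)⁻¹ * g (q ^ 2 * x) -
        (q : ℂ) * g (q⁻¹ ^ 2 * x) *
          (1 + ((q ^ (-2 * γ - 1) : ℝ) : ℂ) * ((q - q⁻¹ : ℝ) : ℂ) ^ 2 * (x : ℂ) ^ 2) := by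
  intro x
  have hq0 : (0:ℝ) < q := lt_trans one_pos hq
  have hQ0 : (q:ℂ) ≠ 0 := by exact_mod_cast ne_of_gt hq0
  -- zpow rewrites
  have hc_eq : (q:ℂ) ^ (-2 : ℤ) = (q:ℂ)⁻¹ ^ 2 := by
    rw [zpow_neg, inv_pow]
    norm_cast
  have hp_eq : (q:ℂ) ^ (-4 : ℤ) = (q:ℂ)⁻¹ ^ 4 := by
    rw [zpow_neg, inv_pow]
    norm_cast
  -- norm facts
  have hnR : ‖(q:ℂ)⁻¹‖ < 1 := by
    rw [norm_inv, Complex.norm_real, Real.norm_eq_abs, abs_of_pos hq0]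
    exact inv_lt_one_of_one_lt₀ hq
  have hR2 : ‖(q:ℂ)⁻¹ ^ 2‖ < 1 := by
    rw [norm_pow]; exact pow_lt_one₀ (norm_nonneg _) hnR (by norm_num)
  have hR4 : ‖(q:ℂ)⁻¹ ^ 4‖ < 1 := by
    rw [norm_pow]; exact pow_lt_one₀ (norm_nonneg _) hnR (by norm_num)
  -- rpow constant manipulations
  have e0 : q ^ (-2 * γ) = q ^ (3:ℕ) * q ^ (-2 * γ - 3) := by
    rw [← Real.rpow_natCast q 3, ← Real.rpow_add hq0]
    congr 1
    push_cast; ring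
  have e1 : q ^ (-2 * γ - 1) = q ^ (2:ℕ) * q ^ (-2 * γ - 3) := by
    rw [← Real.rpow_natCast q 2, ← Real.rpow_add hq0]
    congr 1
    push_cast; ring
  have hK0 : ((q ^ (-2*γ) : ℝ) : ℂ) = (q:ℂ)^3 * ((q ^ (-2*γ-3) : ℝ) : ℂ) := by
    rw [e0]; push_cast; ring
  have hK1 : ((q ^ (-2*γ-1) : ℝ) : ℂ) = (q:ℂ)^2 * ((q ^ (-2*γ-3) : ℝ) : ℂ) := by
    rw [e1]; push_cast; ring
  -- rewrite g
  rw [hg, hg, hg, phi11_eq, phi11_eq, phi11_eq, hc_eq, hp_eq, hK0, hK1]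
  -- argument rewrites
  have ha1 : ε * ((q ^ (-2*γ-3) : ℝ) : ℂ) * ((q - q⁻¹ : ℝ) : ℂ) ^ 2 * (((q^2*x : ℝ)) : ℂ) ^ 2 =
      (q:ℂ)^4 * (ε * ((q ^ (-2*γ-3) : ℝ) : ℂ) * ((q - q⁻¹ : ℝ) : ℂ) ^ 2 * (x : ℂ) ^ 2) := by
    push_cast; ring
  have ha2 : ε * ((q ^ (-2*γ-3) : ℝ) : ℂ) * ((q - q⁻¹ : ℝ) : ℂ) ^ 2 * (((q⁻¹^2*x : ℝ)) : ℂ) ^ 2 =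
      (q:ℂ)⁻¹^4 * (ε * ((q ^ (-2*γ-3) : ℝ) : ℂ) * ((q - q⁻¹ : ℝ) : ℂ) ^ 2 * (x : ℂ) ^ 2) := by
    push_cast; ring
  rw [ha1, ha2]
  set Q : ℂ := (q:ℂ) with hQdef
  set z : ℂ := ε * ((q ^ (-2*γ-3) : ℝ) : ℂ) * ((q - q⁻¹ : ℝ) : ℂ) ^ 2 * (x : ℂ) ^ 2 with hzdef
  -- summabilities
  have Sf : Summable (fun j : ℕ => hgCoef (-ε⁻¹) (Q⁻¹ ^ 2) (Q⁻¹ ^ 4) j * z ^ j) :=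
    summable_hg _ _ _ hR4 hR2 z
  have SfQ : Summable (fun j : ℕ => hgCoef (-ε⁻¹) (Q⁻¹ ^ 2) (Q⁻¹ ^ 4) j * (Q^4*z) ^ j) :=
    summable_hg _ _ _ hR4 hR2 _
  have SfR : Summable (fun j : ℕ => hgCoef (-ε⁻¹) (Q⁻¹ ^ 2) (Q⁻¹ ^ 4) j * (Q⁻¹^4*z) ^ j) :=
    summable_hg _ _ _ hR4 hR2 _
  have hu : Summable (fun j : ℕ =>
      hgCoef (-ε⁻¹) (Q⁻¹ ^ 2) (Q⁻¹ ^ 4) j * z ^ j * (Q + Q⁻¹) -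
        Q⁻¹ * (hgCoef (-ε⁻¹) (Q⁻¹ ^ 2) (Q⁻¹ ^ 4) j * (Q^4*z) ^ j) -
        Q * (hgCoef (-ε⁻¹) (Q⁻¹ ^ 2) (Q⁻¹ ^ 4) j * (Q⁻¹^4*z) ^ j)) :=
    ((Sf.mul_right _).sub (SfQ.mul_left _)).sub (SfR.mul_left _)
  have hv : Summable (fun j : ℕ =>
      hgCoef (-ε⁻¹) (Q⁻¹ ^ 2) (Q⁻¹ ^ 4) j * z ^ j * (Q^3*z) +
        Q * (hgCoef (-ε⁻¹) (Q⁻¹ ^ 2) (Q⁻¹ ^ 4) j * (Q⁻¹^4*z) ^ j) * (ε⁻¹*Q^2*z)) :=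
    (Sf.mul_right _).add ((SfR.mul_left _).mul_right _)
  have hsum : (∑' j : ℕ, (hgCoef (-ε⁻¹) (Q⁻¹ ^ 2) (Q⁻¹ ^ 4) j * z ^ j * (Q + Q⁻¹) -
        Q⁻¹ * (hgCoef (-ε⁻¹) (Q⁻¹ ^ 2) (Q⁻¹ ^ 4) j * (Q^4*z) ^ j) -
        Q * (hgCoef (-ε⁻¹) (Q⁻¹ ^ 2) (Q⁻¹ ^ 4) j * (Q⁻¹^4*z) ^ j))) =
      ∑' j : ℕ, (hgCoef (-ε⁻¹) (Q⁻¹ ^ 2) (Q⁻¹ ^ 4) j * z ^ j * (Q^3*z) +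
        Q * (hgCoef (-ε⁻¹) (Q⁻¹ ^ 2) (Q⁻¹ ^ 4) j * (Q⁻¹^4*z) ^ j) * (ε⁻¹*Q^2*z)) := by
    rw [Summable.tsum_eq_zero_add hu]
    have h0 : hgCoef (-ε⁻¹) (Q⁻¹ ^ 2) (Q⁻¹ ^ 4) 0 * z ^ 0 * (Q + Q⁻¹) -
        Q⁻¹ * (hgCoef (-ε⁻¹) (Q⁻¹ ^ 2) (Q⁻¹ ^ 4) 0 * (Q^4*z) ^ 0) -
        Q * (hgCoef (-ε⁻¹) (Q⁻¹ ^ 2) (Q⁻¹ ^ 4) 0 * (Q⁻¹^4*z) ^ 0) = 0 := by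
      simp only [pow_zero]; ring
    rw [h0, zero_add]
    exact tsum_congr (fun j => key_step Q ε z hQ0 hε hR2 hR4 j)
  -- expand linearity
  have eu : (∑' j : ℕ, (hgCoef (-ε⁻¹) (Q⁻¹ ^ 2) (Q⁻¹ ^ 4) j * z ^ j * (Q + Q⁻¹) -
        Q⁻¹ * (hgCoef (-ε⁻¹) (Q⁻¹ ^ 2) (Q⁻¹ ^ 4) j * (Q^4*z) ^ j) -
        Q * (hgCoef (-ε⁻¹) (Q⁻¹ ^ 2) (Q⁻¹ ^ 4) j * (Q⁻¹^4*z) ^ j))) =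
      (∑' j : ℕ, hgCoef (-ε⁻¹) (Q⁻¹ ^ 2) (Q⁻¹ ^ 4) j * z ^ j) * (Q + Q⁻¹) -
        Q⁻¹ * (∑' j : ℕ, hgCoef (-ε⁻¹) (Q⁻¹ ^ 2) (Q⁻¹ ^ 4) j * (Q^4*z) ^ j) -
        Q * (∑' j : ℕ, hgCoef (-ε⁻¹) (Q⁻¹ ^ 2) (Q⁻¹ ^ 4) j * (Q⁻¹^4*z) ^ j) := by
    rw [Summable.tsum_sub ((Sf.mul_right _).sub (SfQ.mul_left _)) (SfR.mul_left _),
        Summable.tsum_sub (Sf.mul_right _) (SfQ.mul_left _), tsum_mul_right, tsum_mul_left, tsum_mul_left]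
  have ev : (∑' j : ℕ, (hgCoef (-ε⁻¹) (Q⁻¹ ^ 2) (Q⁻¹ ^ 4) j * z ^ j * (Q^3*z) +
        Q * (hgCoef (-ε⁻¹) (Q⁻¹ ^ 2) (Q⁻¹ ^ 4) j * (Q⁻¹^4*z) ^ j) * (ε⁻¹*Q^2*z))) =
      (∑' j : ℕ, hgCoef (-ε⁻¹) (Q⁻¹ ^ 2) (Q⁻¹ ^ 4) j * z ^ j) * (Q^3*z) +
        Q * (∑' j : ℕ, hgCoef (-ε⁻¹) (Q⁻¹ ^ 2) (Q⁻¹ ^ 4) j * (Q⁻¹^4*z) ^ j) * (ε⁻¹*Q^2*z) := by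
    rw [Summable.tsum_add (Sf.mul_right _) ((SfR.mul_left _).mul_right _), tsum_mul_right,
        tsum_mul_right, tsum_mul_left]
  rw [eu, ev] at hsum
  have hEps : ε * ε⁻¹ = 1 := mul_inv_cancel₀ hε
  linear_combination (-1 : ℂ) * hsum - (Q * (∑' j : ℕ, hgCoef (-ε⁻¹) (Q⁻¹ ^ 2) (Q⁻¹ ^ 4) j * (Q⁻¹^4*z) ^ j) * Q^2 * ((q ^ (-2*γ-3) : ℝ) : ℂ) * ((q - q⁻¹ : ℝ) : ℂ)^2 * (x:ℂ)^2) * hEps
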